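/- Let n, m, u be positive integers. The following are equivalent: (1) n divides m, u ≤ 2^n − 1, u is odd and coprime to 2^n − 1, and the number u·(2^m−1)/(2^n−1) has exactly two nonzero binary digits; (2) either (a) m = n ≥ 2 and u = 1 + 2^k for some k ∈ {1,…,m−1} with gcd(m, 2k) dividing k (equivalently, the 2-adic valuation of k is at least that of m), or (b) m is even, n = m/2, and u = 1. -/

import Mathlib

private lemma geom_closed (n q : ℕ) :
    (2 ^ n - 1) * (∑ j ∈ Finset.range q, 2 ^ (n * j)) = 2 ^ (n * q) - 1 := by
  induction q with
  | zero => simp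
  | succ q ih =>
    rw [Finset.sum_range_succ, Nat.left_distrib, ih, Nat.mul_succ, pow_add]
    have hA : 0 < 2 ^ (n * q) := Nat.two_pow_pos _
    have hB : 0 < 2 ^ n := Nat.two_pow_pos _
    rw [Nat.sub_mul, one_mul]
    have h2 : 2 ^ n * 2 ^ (n * q) = 2 ^ (n * q) * 2 ^ n := Nat.mul_comm _ _
    have h3 : 2 ^ (n * q) ≤ 2 ^ n * 2 ^ (n * q) := Nat.le_mul_of_pos_left _ hB
    omega

private lemma sum_digits_shift (u : ℕ) :
    (Nat.digits 2 u).sum = u % 2 + (Nat.digits 2 (u / 2)).sum := by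
  rcases Nat.eq_zero_or_pos u with rfl | h
  · simp
  · rw [Nat.digits_def' (by norm_num : (1:ℕ) < 2) h]; simp

private lemma sum_digits_add_pow_mul :
    ∀ (n u v : ℕ), u < 2 ^ n → 0 < v →
    (Nat.digits 2 (u + 2 ^ n * v)).sum
      = (Nat.digits 2 u).sum + (Nat.digits 2 v).sum := by
  intro n
  induction n with
  | zero =>
    intro u v hu hv
    obtain rfl : u = 0 := by omega
    simp
  | succ n ih =>
    intro u v hu hv
    have hx : 0 < u + 2 ^ (n + 1) * v := by positivity
    have h2 : 2 ^ (n + 1) * v = 2 ^ n * v * 2 := by ring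
    have hmod : (u + 2 ^ (n + 1) * v) % 2 = u % 2 := by
      rw [h2, Nat.add_mul_mod_self_right]
    have hdiv : (u + 2 ^ (n + 1) * v) / 2 = u / 2 + 2 ^ n * v := by
      rw [h2, Nat.add_mul_div_right _ _ (by norm_num : (0:ℕ) < 2)]
    have hu2 : u / 2 < 2 ^ n := by
      have : (2:ℕ) ^ (n+1) = 2 ^ n * 2 := by ring
      omega
    rw [Nat.digits_def' (by norm_num : (1:ℕ) < 2) hx, List.sum_cons, hmod, hdiv,
      ih (u / 2) v hu2 hv, sum_digits_shift u]
    omega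

private lemma sum_digits_mul_geom (n u q : ℕ) (hu : 0 < u) (hun : u < 2 ^ n) :
    (Nat.digits 2 (u * ∑ j ∈ Finset.range q, 2 ^ (n * j))).sum
      = q * (Nat.digits 2 u).sum := by
  induction q with
  | zero => simp
  | succ q ih =>
    rcases Nat.eq_zero_or_pos q with rfl | hq
    · simp
    · have hS : (∑ j ∈ Finset.range (q + 1), 2 ^ (n * j))
          = 1 + 2 ^ n * ∑ j ∈ Finset.range q, 2 ^ (n * j) := by
        rw [Finset.sum_range_succ']
        have he : ∀ i, 2 ^ (n * (i + 1)) = 2 ^ n * 2 ^ (n * i) := by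
          intro i
          rw [← pow_add]
          congr 1
          ring
        rw [Finset.sum_congr rfl (fun i _ => he i), ← Finset.mul_sum]
        simp [Nat.add_comm]
      have hSpos : 0 < ∑ j ∈ Finset.range q, 2 ^ (n * j) := by
        apply Finset.sum_pos
        · intro i _
          exact Nat.two_pow_pos _
        · exact Finset.nonempty_range_iff.mpr (by omega)
      have hmul : u * (1 + 2 ^ n * ∑ j ∈ Finset.range q, 2 ^ (n * j))
          = u + 2 ^ n * (u * ∑ j ∈ Finset.range q, 2 ^ (n * j)) := by ring
      rw [hS, hmul, sum_digits_add_pow_mul n u _ hun (by positivity), ih]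
      ring

private lemma sum_digits_eq_zero : ∀ u : ℕ, (Nat.digits 2 u).sum = 0 → u = 0 := by
  intro u
  induction u using Nat.strong_induction_on with
  | _ u ih =>
    intro h
    rcases Nat.eq_zero_or_pos u with rfl | hu
    · rfl
    · rw [Nat.digits_def' (by norm_num : (1:ℕ) < 2) hu, List.sum_cons] at h
      have h2 := ih (u / 2) (by omega) (by omega)
      omega

private lemma sum_digits_eq_one : ∀ u : ℕ, (Nat.digits 2 u).sum = 1 → ∃ t, u = 2 ^ t := by
  intro u
  induction u using Nat.strong_induction_on with
  | _ u ih =>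
    intro h
    have hu : 0 < u := by
      rcases Nat.eq_zero_or_pos u with rfl | hu
      · simp at h
      · exact hu
    rw [Nat.digits_def' (by norm_num : (1:ℕ) < 2) hu, List.sum_cons] at h
    rcases Nat.even_or_odd u with he | ho
    · have hmd : u % 2 = 0 := Nat.even_iff.mp he
      obtain ⟨t, ht⟩ := ih (u / 2) (by omega) (by omega)
      refine ⟨t + 1, ?_⟩
      rw [pow_succ]
      omega
    · have hmd : u % 2 = 1 := Nat.odd_iff.mp ho
      have h0 := sum_digits_eq_zero (u / 2) (by omega)
      exact ⟨0, by omega⟩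

private lemma sum_digits_eq_two_of_odd (u : ℕ) (ho : Odd u)
    (h : (Nat.digits 2 u).sum = 2) : ∃ k, 1 ≤ k ∧ u = 1 + 2 ^ k := by
  have hmd : u % 2 = 1 := Nat.odd_iff.mp ho
  have hu : 0 < u := by omega
  rw [Nat.digits_def' (by norm_num : (1:ℕ) < 2) hu, List.sum_cons, hmd] at h
  obtain ⟨t, ht⟩ := sum_digits_eq_one (u / 2) (by omega)
  have hp : 0 < 2 ^ t := Nat.two_pow_pos _
  refine ⟨t + 1, by omega, ?_⟩
  rw [pow_succ]
  omega

private lemma pow_sub_one_dvd_pow_sub_one {d k : ℕ} (h : d ∣ k) : 2 ^ d - 1 ∣ 2 ^ k - 1 := by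
  obtain ⟨c, rfl⟩ := h
  simpa only [one_pow, pow_mul] using Nat.sub_dvd_pow_sub_pow (2 ^ d) 1 c

private lemma dvd_of_pow_sub_one_dvd {d k : ℕ} (hd : 0 < d)
    (h : 2 ^ d - 1 ∣ 2 ^ k - 1) : d ∣ k := by
  have h1 : 2 ^ d - 1 ∣ 2 ^ (d * (k / d)) - 1 := pow_sub_one_dvd_pow_sub_one ⟨k / d, rfl⟩
  have hA : 0 < 2 ^ (d * (k / d)) := Nat.two_pow_pos _
  have hB : 0 < 2 ^ (k % d) := Nat.two_pow_pos _
  have e : 2 ^ (k % d) * 2 ^ (d * (k / d)) = 2 ^ k := by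
    rw [← pow_add]
    congr 1
    exact Nat.mod_add_div k d
  have h2 : 2 ^ k - 1 = 2 ^ (k % d) * (2 ^ (d * (k / d)) - 1) + (2 ^ (k % d) - 1) := by
    rw [Nat.mul_sub, e, mul_one]
    have : 2 ^ (k % d) ≤ 2 ^ k := Nat.pow_le_pow_right (by norm_num) (Nat.mod_le k d)
    omega
  have key : 2 ^ d - 1 ∣ 2 ^ (k % d) - 1 := by
    have h3 : 2 ^ d - 1 ∣ 2 ^ (k % d) * (2 ^ (d * (k / d)) - 1) := Dvd.dvd.mul_left h1 _
    have h4 : 2 ^ (k % d) - 1 = (2 ^ k - 1) - 2 ^ (k % d) * (2 ^ (d * (k / d)) - 1) := by omega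
    rw [h4]
    exact Nat.dvd_sub h h3
  have hlt : 2 ^ (k % d) - 1 < 2 ^ d - 1 := by
    have : 2 ^ (k % d) < 2 ^ d := Nat.pow_lt_pow_right (by norm_num) (Nat.mod_lt _ hd)
    omega
  have h0 : 2 ^ (k % d) - 1 = 0 := Nat.eq_zero_of_dvd_of_lt key hlt
  have : k % d = 0 := by
    by_contra hne
    have : 2 ^ 1 ≤ 2 ^ (k % d) := Nat.pow_le_pow_right (by norm_num) (by omega)
    omega
  exact Nat.dvd_of_mod_eq_zero this

private lemma dvd_pow_gcd_sub_one {x a b : ℕ} (ha : x ∣ 2 ^ a - 1) (hb : x ∣ 2 ^ b - 1) :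
    x ∣ 2 ^ Nat.gcd a b - 1 := by
  rcases Nat.eq_zero_or_pos a with rfl | hapos
  · simpa using hb
  rcases Nat.eq_zero_or_pos b with rfl | hbpos
  · simpa using ha
  have hxpos : 0 < x := by
    rcases Nat.eq_zero_or_pos x with rfl | h
    · obtain ⟨c, hc⟩ := ha
      have : 2 ^ 1 ≤ 2 ^ a := Nat.pow_le_pow_right (by norm_num) hapos
      omega
    · exact h
  haveI : NeZero x := ⟨hxpos.ne'⟩
  have cast_one : ∀ c : ℕ, 0 < c → (x ∣ 2 ^ c - 1 ↔ (2 : ZMod x) ^ c = 1) := by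
    intro c hc
    rw [← ZMod.natCast_eq_zero_iff]
    have h1 : (1:ℕ) ≤ 2 ^ c := Nat.one_le_two_pow
    rw [Nat.cast_sub h1]
    push_cast
    constructor
    · intro h; linear_combination h
    · intro h; linear_combination h
  have ho1 : orderOf (2 : ZMod x) ∣ a := orderOf_dvd_of_pow_eq_one ((cast_one a hapos).mp ha)
  have ho2 : orderOf (2 : ZMod x) ∣ b := orderOf_dvd_of_pow_eq_one ((cast_one b hbpos).mp hb)
  have ho : orderOf (2 : ZMod x) ∣ Nat.gcd a b := Nat.dvd_gcd ho1 ho2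
  exact (cast_one _ (Nat.gcd_pos_of_pos_left _ hapos)).mpr (orderOf_dvd_iff_pow_eq_one.mp ho)

private lemma pow_fac (k : ℕ) : (2 ^ k - 1) * (2 ^ k + 1) = 2 ^ (2 * k) - 1 := by
  obtain ⟨c, hc⟩ : ∃ c, 2 ^ k = c + 1 := ⟨2 ^ k - 1, by have := Nat.two_pow_pos k; omega⟩
  rw [two_mul, pow_add, hc]
  have h1 : (c + 1) * (c + 1) = c * (c + 2) + 1 := by ring
  have h2 : (c + 1 - 1) * (c + 1 + 1) = c * (c + 2) := by
    congr 1 <;> omega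
  omega

private lemma coprime_iff_gcd_dvd (m k : ℕ) (hm : 0 < m) (hk : 0 < k) :
    Nat.Coprime (1 + 2 ^ k) (2 ^ m - 1) ↔ Nat.gcd m (2 * k) ∣ k := by
  have hdpos : 0 < Nat.gcd m (2 * k) := Nat.gcd_pos_of_pos_left _ hm
  have hdvd1 : 2 ^ Nat.gcd m (2 * k) - 1 ∣ 2 ^ m - 1 :=
    pow_sub_one_dvd_pow_sub_one (Nat.gcd_dvd_left _ _)
  have hdvd2 : 2 ^ Nat.gcd m (2 * k) - 1 ∣ 2 ^ (2 * k) - 1 :=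
    pow_sub_one_dvd_pow_sub_one (Nat.gcd_dvd_right _ _)
  have hkpow : 0 < 2 ^ k := Nat.two_pow_pos k
  constructor
  · intro hco
    have hco2 : Nat.Coprime (2 ^ Nat.gcd m (2 * k) - 1) (1 + 2 ^ k) :=
      Nat.Coprime.coprime_dvd_left hdvd1 hco.symm
    have h3 : 2 ^ Nat.gcd m (2 * k) - 1 ∣ (2 ^ k - 1) * (1 + 2 ^ k) := by
      rw [show (2 ^ k - 1) * (1 + 2 ^ k) = (2 ^ k - 1) * (2 ^ k + 1) by ring, pow_fac]
      exact hdvd2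
    have h4 : 2 ^ Nat.gcd m (2 * k) - 1 ∣ 2 ^ k - 1 :=
      (Nat.Coprime.dvd_of_dvd_mul_right hco2 h3)
    exact dvd_of_pow_sub_one_dvd hdpos h4
  · intro hgd
    have h4 : Nat.gcd (1 + 2 ^ k) (2 ^ m - 1) ∣ 2 ^ (2 * k) - 1 := by
      refine (Nat.gcd_dvd_left _ _).trans ⟨2 ^ k - 1, ?_⟩
      rw [← pow_fac k]
      ring
    have h5 : Nat.gcd (1 + 2 ^ k) (2 ^ m - 1) ∣ 2 ^ Nat.gcd m (2 * k) - 1 :=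
      dvd_pow_gcd_sub_one (Nat.gcd_dvd_right _ _) h4
    have h6 : Nat.gcd (1 + 2 ^ k) (2 ^ m - 1) ∣ 2 ^ k - 1 :=
      h5.trans (pow_sub_one_dvd_pow_sub_one hgd)
    have h7 : Nat.gcd (1 + 2 ^ k) (2 ^ m - 1) ∣ 2 := by
      have := Nat.dvd_sub (Nat.gcd_dvd_left (1 + 2 ^ k) (2 ^ m - 1)) h6
      have he : (1 + 2 ^ k) - (2 ^ k - 1) = 2 := by omega
      rwa [he] at this
    rcases (Nat.dvd_prime Nat.prime_two).mp h7 with h | h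
    · exact h
    · exfalso
      have h8 : Nat.gcd (1 + 2 ^ k) (2 ^ m - 1) ∣ 2 ^ m - 1 := Nat.gcd_dvd_right _ _
      rw [h] at h8
      obtain ⟨c, hc⟩ := h8
      have h9 : 2 ^ m = 2 * 2 ^ (m - 1) := by
        rw [← pow_succ']
        congr 1
        omega
      have := Nat.two_pow_pos (m - 1)
      omega


/-- Number-theoretic characterization: for positive integers `n, m, u`, one has `n ∣ m`,
`u ≤ 2^n - 1`, `u` odd and coprime to `2^n - 1`, and `u·(2^m-1)/(2^n-1)` having exactly two
nonzero binary digits, if and only if either `m = n ≥ 2` and `u = 1 + 2^k` with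
`1 ≤ k ≤ m - 1` and `gcd(m, 2k) ∣ k`, or `m` is even, `n = m/2` and `u = 1`. -/
theorem two_binary_digits_characterization
    (n m u : ℕ) (hn : 0 < n) (hm : 0 < m) (hu : 0 < u) :
    (n ∣ m ∧ u ≤ 2 ^ n - 1 ∧ Odd u ∧ Nat.Coprime u (2 ^ n - 1) ∧
        (Nat.digits 2 (u * ((2 ^ m - 1) / (2 ^ n - 1)))).sum = 2) ↔
      ((m = n ∧ 2 ≤ m ∧
          ∃ k : ℕ, 1 ≤ k ∧ k ≤ m - 1 ∧ u = 1 + 2 ^ k ∧ Nat.gcd m (2 * k) ∣ k) ∨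
        (2 ∣ m ∧ n = m / 2 ∧ u = 1)) := by
  have hd1 : (Nat.digits 2 1).sum = 1 := by norm_num
  have h2n : 2 ≤ 2 ^ n := by
    calc 2 = 2 ^ 1 := rfl
    _ ≤ 2 ^ n := Nat.pow_le_pow_right (by norm_num) hn
  constructor
  · rintro ⟨hdvd, hule, hodd, hcop, hsum⟩
    obtain ⟨q, hq⟩ := hdvd
    have hqpos : 0 < q := by
      rcases Nat.eq_zero_or_pos q with rfl | h
      · omega
      · exact h
    have hdiveq : (2 ^ m - 1) / (2 ^ n - 1) = ∑ j ∈ Finset.range q, 2 ^ (n * j) := by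
      apply Nat.div_eq_of_eq_mul_left (by omega)
      rw [Nat.mul_comm, geom_closed, hq]
    rw [hdiveq, sum_digits_mul_geom n u q hu (by omega)] at hsum
    have hspos : 0 < (Nat.digits 2 u).sum := by
      rcases Nat.eq_zero_or_pos ((Nat.digits 2 u).sum) with h | h
      · exact absurd (sum_digits_eq_zero u h) (by omega)
      · exact h
    have hq2 : q ∣ 2 := ⟨_, hsum.symm⟩
    rcases (Nat.dvd_prime Nat.prime_two).mp hq2 with rfl | rfl
    · -- q = 1 : m = n
      have hmn : m = n := by omega
      subst hmn
      obtain ⟨k, hk1, hk⟩ := sum_digits_eq_two_of_odd u hodd (by omega)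
      have hkpow : 0 < 2 ^ k := Nat.two_pow_pos k
      have hklt : k < m := by
        by_contra hc
        have : 2 ^ m ≤ 2 ^ k := Nat.pow_le_pow_right (by norm_num) (by omega)
        omega
      left
      refine ⟨rfl, by omega, k, hk1, by omega, hk, ?_⟩
      rw [hk] at hcop
      exact (coprime_iff_gcd_dvd m k hm hk1).mp hcop
    · -- q = 2
      obtain ⟨t, ht⟩ := sum_digits_eq_one u (by omega)
      have hmd : u % 2 = 1 := Nat.odd_iff.mp hodd
      have hu1 : u = 1 := by
        rcases Nat.eq_zero_or_pos t with rfl | ht1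
        · simpa using ht
        · exfalso
          have : 2 ^ t = 2 * 2 ^ (t - 1) := by
            rw [← pow_succ']
            congr 1
            omega
          omega
      right
      exact ⟨⟨n, by omega⟩, by omega, hu1⟩
  · rintro (⟨hmn, hm2, k, hk1, hkm, hueq, hgcd⟩ | ⟨hm2, hneq, hueq⟩)
    · subst hmn
      subst hueq
      have hkpow : 0 < 2 ^ k := Nat.two_pow_pos k
      have hk2 : 2 ^ k ≤ 2 ^ (m - 1) := Nat.pow_le_pow_right (by norm_num) hkm
      have hsplit : 2 ^ (m - 1) * 2 = 2 ^ m := by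
        rw [← pow_succ]
        congr 1
        omega
      have h2m1 : 2 ≤ 2 ^ (m - 1) := by
        calc 2 = 2 ^ 1 := rfl
        _ ≤ 2 ^ (m - 1) := Nat.pow_le_pow_right (by norm_num) (by omega)
      have hk2m : 2 ^ k % 2 = 0 := by
        have : 2 ^ k = 2 * 2 ^ (k - 1) := by
          rw [← pow_succ']
          congr 1
          omega
        omega
      refine ⟨dvd_rfl, by omega, ?_, ?_, ?_⟩
      · rw [Nat.odd_iff]
        omega
      · exact (coprime_iff_gcd_dvd m k hm hk1).mpr hgcd
      · rw [Nat.div_self (by omega : 0 < 2 ^ m - 1), Nat.mul_one]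
        have hadd := sum_digits_add_pow_mul k 1 1 (by omega) (by omega)
        rw [Nat.mul_one] at hadd
        rw [hadd, hd1]
    · subst hueq
      subst hneq
      have hS2 : (2 ^ m - 1) / (2 ^ (m / 2) - 1) = 1 + 2 ^ (m / 2) := by
        apply Nat.div_eq_of_eq_mul_left (by omega)
        have hf := pow_fac (m / 2)
        have h2 : 2 * (m / 2) = m := by omega
        rw [h2] at hf
        rw [← hf]
        ring
      refine ⟨⟨2, by omega⟩, by omega, odd_one, Nat.coprime_one_left _, ?_⟩
      rw [Nat.one_mul, hS2]
      have hadd := sum_digits_add_pow_mul (m / 2) 1 1 (by omega) (by omega)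
      rw [Nat.mul_one] at hadd
      rw [hadd, hd1]
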